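/- Let e₁,…,e₇ be the standard basis of ℝ⁷, and let φ = e^{123} + e^{145} + e^{167} + e^{246} − e^{257} − e^{347} − e^{356} ∈ ⋀³ℝ⁷ be the fundamental 3-form of G₂. Then the kernel of the linear map ⋀³ℝ⁷ → ⋀⁶ℝ⁷ given by x ↦ φ·x has dimension 28. -/

import Mathlib

open ExteriorAlgebra

/-- The images in the exterior algebra of the standard basis vectors of `ℝ⁷`. -/
noncomputable def g2e (i : Fin 7) : ExteriorAlgebra ℝ (Fin 7 → ℝ) :=
  ExteriorAlgebra.ι ℝ (Pi.single i (1 : ℝ))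

/-- The fundamental (Cayley) 3-form of `G₂`:
`φ = e¹²³ + e¹⁴⁵ + e¹⁶⁷ + e²⁴⁶ − e²⁵⁷ − e³⁴⁷ − e³⁵⁶` (indices `1,…,7` written `0,…,6`). -/
noncomputable def g2phi : ExteriorAlgebra ℝ (Fin 7 → ℝ) :=
  g2e 0 * g2e 1 * g2e 2 + g2e 0 * g2e 3 * g2e 4 + g2e 0 * g2e 5 * g2e 6 +
  g2e 1 * g2e 3 * g2e 5 - g2e 1 * g2e 4 * g2e 6 - g2e 2 * g2e 3 * g2e 6 -
  g2e 2 * g2e 4 * g2e 5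

noncomputable def eV {n : ℕ} (v : Fin n → Fin 7) : ExteriorAlgebra ℝ (Fin 7 → ℝ) :=
  ιMulti ℝ n (fun i => Pi.single (v i) (1 : ℝ))

noncomputable def eL (l : List (Fin 7)) : ExteriorAlgebra ℝ (Fin 7 → ℝ) :=
  (l.map g2e).prod


lemma eV_eq_eL {n : ℕ} (v : Fin n → Fin 7) : eV v = eL (List.ofFn v) := by
  rw [eV, eL, ιMulti_apply]
  congr 1
  rw [← List.ofFn_get (List.map g2e (List.ofFn v))]
  simp [List.get_ofFn, g2e]

lemma eL_ofFn {n : ℕ} (v : Fin n → Fin 7) : eL (List.ofFn v) = eV v := (eV_eq_eL v).symm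

lemma eV_mul {m n : ℕ} (v : Fin m → Fin 7) (w : Fin n → Fin 7) :
    eV v * eV w = eV (Fin.append v w) := by
  rw [eV_eq_eL, eV_eq_eL, eV_eq_eL, eL, eL, eL, ← List.prod_append, ← List.map_append]
  congr 2
  simp [List.ofFn_congr, Fin.append]
  rw [← List.ofFn_fin_append]
  rfl


lemma g2e_swap (a b : Fin 7) : g2e a * g2e b = -(g2e b * g2e a) := by
  have := ι_add_mul_swap (R := ℝ) (M := Fin 7 → ℝ) (Pi.single a (1:ℝ)) (Pi.single b 1)
  rw [g2e, g2e, eq_neg_iff_add_eq_zero]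
  exact this

lemma g2e_sq (a : Fin 7) : g2e a * g2e a = 0 := ι_sq_zero _

lemma eL_cons (a : Fin 7) (l : List (Fin 7)) : eL (a :: l) = g2e a * eL l := by
  simp [eL]

/-- one insertion step -/
lemma g2e_mul_eL_sorted (a : Fin 7) :
    ∀ (l : List (Fin 7)), l.Pairwise (· < ·) →
    ∃ ε : ℝ, ∃ m : List (Fin 7), m.Pairwise (· < ·) ∧ (ε = 0 ∨ m.length = l.length + 1) ∧
      (∀ x ∈ m, x = a ∨ x ∈ l) ∧ g2e a * eL l = ε • eL m := by
  intro l
  induction l with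
  | nil =>
      intro _
      exact ⟨1, [a], by simp, Or.inr (by simp), by simp, by simp [eL]⟩
  | cons b t ih =>
      intro hs
      rw [List.pairwise_cons] at hs
      rcases lt_trichotomy a b with h | h | h
      · refine ⟨1, a :: b :: t, ?_, Or.inr (by simp), ?_, by simp [eL_cons]⟩
        · rw [List.pairwise_cons]
          refine ⟨fun c hc => ?_, by rw [List.pairwise_cons]; exact hs⟩
          rcases List.mem_cons.1 hc with hc | hc
          · omega
          · exact lt_trans h (hs.1 c hc)
        · intro x hx
          rcases List.mem_cons.1 hx with hx | hx
          · exact Or.inl hx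
          · exact Or.inr hx
      · subst h
        refine ⟨0, [], by simp, Or.inl rfl, by simp, ?_⟩
        rw [eL_cons, ← mul_assoc, g2e_sq, zero_mul, zero_smul]
      · obtain ⟨ε, m, hm, hlen, hmem, heq⟩ := ih hs.2
        refine ⟨-ε, b :: m, ?_, ?_, ?_, ?_⟩
        · rw [List.pairwise_cons]
          refine ⟨fun c hc => ?_, hm⟩
          rcases hmem c hc with rfl | hc
          · exact h
          · exact hs.1 c hc
        · rcases hlen with h0 | h0
          · exact Or.inl (by simp [h0])
          · exact Or.inr (by simp [h0])
        · intro x hx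
          rcases List.mem_cons.1 hx with rfl | hx
          · exact Or.inr List.mem_cons_self
          · rcases hmem x hx with h1 | h1
            · exact Or.inl h1
            · exact Or.inr (List.mem_cons_of_mem _ h1)
        · rw [eL_cons, eL_cons, ← mul_assoc, g2e_swap a b, neg_mul, mul_assoc, heq,
            mul_smul_comm, neg_smul]

/-- full sorting -/
lemma eL_norm : ∀ (l : List (Fin 7)),
    ∃ ε : ℝ, ∃ m : List (Fin 7), m.Pairwise (· < ·) ∧ (ε = 0 ∨ m.length = l.length) ∧
      eL l = ε • eL m := by
  intro l
  induction l with
  | nil => exact ⟨1, [], by simp, Or.inr rfl, by simp⟩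
  | cons a t ih =>
      obtain ⟨ε, m, hm, hlen, heq⟩ := ih
      obtain ⟨ε', m', hm', hlen', _, heq'⟩ := g2e_mul_eL_sorted a m hm
      refine ⟨ε * ε', m', hm', ?_, ?_⟩
      · rcases hlen' with h0 | h0
        · exact Or.inl (by simp [h0])
        · rcases hlen with h1 | h1
          · exact Or.inl (by simp [h1])
          · exact Or.inr (by simp [h0, h1])
      · rw [eL_cons, heq, mul_smul_comm, heq', smul_smul]


/-- the determinant-of-coordinates alternating form in degree n with columns τ -/
noncomputable def dform (n : ℕ) (τ : Fin n → Fin 7) :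
    (Fin 7 → ℝ) [⋀^Fin n]→ₗ[ℝ] ℝ :=
  (Matrix.detRowAlternating : (Fin n → ℝ) [⋀^Fin n]→ₗ[ℝ] ℝ).compLinearMap
    (LinearMap.funLeft ℝ ℝ τ)

noncomputable def dfun (n : ℕ) (τ : Fin n → Fin 7) :
    ExteriorAlgebra ℝ (Fin 7 → ℝ) →ₗ[ℝ] ℝ :=
  liftAlternating (Function.update (fun _ => 0) n (dform n τ))

/-- the delta matrix determinant -/
noncomputable def dm {n : ℕ} (τ v : Fin n → Fin 7) : ℝ :=
  Matrix.det (Matrix.of fun s t => if v s = τ t then (1:ℝ) else 0)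


lemma dfun_eV {n : ℕ} (τ v : Fin n → Fin 7) : dfun n τ (eV v) = dm τ v := by
  rw [dfun, eV, liftAlternating_apply_ιMulti, Function.update_self, dform,
    AlternatingMap.compLinearMap_apply, Matrix.detRowAlternating, dm]
  congr 1
  ext s t
  simp [LinearMap.funLeft, Matrix.of_apply, Pi.single_apply, eq_comm]

lemma dfun_eV_ne {m n : ℕ} (h : m ≠ n) (τ : Fin n → Fin 7) (v : Fin m → Fin 7) :
    dfun n τ (eV v) = 0 := by
  rw [dfun, eV, liftAlternating_apply_ιMulti, Function.update_of_ne h]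
  rfl

lemma dm_eq_zero {n : ℕ} {τ v : Fin n → Fin 7}
    (h : (∃ s s', s ≠ s' ∧ v s = v s') ∨ (∃ s, ∀ t, v s ≠ τ t) ∨ (∃ t, ∀ s, v s ≠ τ t)) :
    dm τ v = 0 := by
  rcases h with ⟨s, s', hne, hss⟩ | ⟨s, hs⟩ | ⟨t, ht⟩
  · exact Matrix.det_zero_of_row_eq hne (by ext t; simp [hss])
  · exact Matrix.det_eq_zero_of_row_eq_zero s (fun t => by simp [hs t])
  · exact Matrix.det_eq_zero_of_column_eq_zero t (fun s => by simp [ht s])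

lemma dm_self {n : ℕ} {τ : Fin n → Fin 7} (hτ : Function.Injective τ) : dm τ τ = 1 := by
  have : (Matrix.of fun s t => if τ s = τ t then (1:ℝ) else 0) = 1 := by
    ext s t
    simp [Matrix.one_apply, hτ.eq_iff]
  rw [dm, this, Matrix.det_one]

lemma dm_perm {n : ℕ} {τ : Fin n → Fin 7} (hτ : Function.Injective τ)
    (σ : Equiv.Perm (Fin n)) : dm τ (τ ∘ σ) = Equiv.Perm.sign σ := by
  have : (Matrix.of fun s t => if (τ ∘ σ) s = τ t then (1:ℝ) else 0)
      = σ.permMatrix ℝ := by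
    ext s t
    simp only [Matrix.of_apply, Equiv.Perm.permMatrix, PEquiv.toMatrix_apply,
      Equiv.toPEquiv_apply, Option.mem_def, Option.some.injEq, Function.comp_apply, hτ.eq_iff]
  rw [dm, this, Matrix.det_permutation]


abbrev T3 := {p : Fin 7 × Fin 7 × Fin 7 // p.1 < p.2.1 ∧ p.2.1 < p.2.2}

def vec3 (σ : T3) : Fin 3 → Fin 7 := ![σ.1.1, σ.1.2.1, σ.1.2.2]

noncomputable def g2W (σ : T3) : ExteriorAlgebra ℝ (Fin 7 → ℝ) := eV (vec3 σ)

lemma strictMono3 {a b c : Fin 7} (h1 : a < b) (h2 : b < c) : StrictMono ![a, b, c] := by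
  intro s t h
  fin_cases s <;> fin_cases t <;> simp_all <;> omega

lemma vec3_strictMono (σ : T3) : StrictMono (vec3 σ) := strictMono3 σ.2.1 σ.2.2

lemma vec3_inj : Function.Injective vec3 := by
  rintro ⟨⟨a, b, c⟩, h⟩ ⟨⟨a', b', c'⟩, h'⟩ he
  have h0 := congrFun he 0
  have h1 := congrFun he 1
  have h2 := congrFun he 2
  simp [vec3] at h0 h1 h2
  simp [h0, h1, h2]

/-- key duality lemma for strictly monotone index vectors -/
lemma dm_delta {n : ℕ} {f g : Fin n → Fin 7} (hf : StrictMono f) (hg : StrictMono g) :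
    dm g f = if f = g then 1 else 0 := by
  split_ifs with h
  · subst h; exact dm_self hf.injective
  · haveI : WellFoundedLT (Fin n) := Finite.to_wellFoundedLT
    have hr : Set.range f ≠ Set.range g := by
      intro hr
      exact h ((StrictMono.range_inj (β := Fin n) (γ := Fin 7) hf hg).1 hr)
    by_cases hsub : Set.range f ⊆ Set.range g
    · have hsub' : ¬ Set.range g ⊆ Set.range f := fun h2 => hr (hsub.antisymm h2)
      obtain ⟨x, ⟨t, rfl⟩, hx⟩ := Set.not_subset.1 hsub'
      exact dm_eq_zero (Or.inr (Or.inr ⟨t, fun s hs => hx ⟨s, hs⟩⟩))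
    · obtain ⟨x, ⟨s, rfl⟩, hx⟩ := Set.not_subset.1 hsub
      exact dm_eq_zero (Or.inr (Or.inl ⟨s, fun t hs => hx ⟨t, hs.symm⟩⟩))

lemma g2W_indep : LinearIndependent ℝ g2W := by
  rw [Fintype.linearIndependent_iff]
  intro c hc τ
  have := congrArg (dfun 3 (vec3 τ)) hc
  rw [map_sum, map_zero] at this
  simp only [map_smul, g2W, dfun_eV, smul_eq_mul] at this
  rw [Finset.sum_eq_single τ] at this
  · rw [dm_delta (vec3_strictMono τ) (vec3_strictMono τ), if_pos rfl, mul_one] at this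
    exact this
  · intro σ _ hσ
    rw [dm_delta (vec3_strictMono σ) (vec3_strictMono τ),
      if_neg (fun h => hσ (vec3_inj h)), mul_zero]
  · intro h
    exact absurd (Finset.mem_univ τ) h

/-- every basis monomial of degree 3 lies in the span of the sorted ones -/
lemma eV3_mem_span (r : Fin 3 → Fin 7) :
    eV r ∈ Submodule.span ℝ (Set.range g2W) := by
  obtain ⟨ε, m, hm, hlen, heq⟩ := eL_norm (List.ofFn r)
  rw [eV_eq_eL, heq]
  rcases hlen with rfl | hlen
  · rw [zero_smul]; exact Submodule.zero_mem _
  · rw [List.length_ofFn] at hlen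
    match m, hlen with
    | [x, y, z], _ =>
      simp only [List.pairwise_cons, List.mem_cons] at hm
      have hxy : x < y := hm.1 y (by simp)
      have hyz : y < z := hm.2.1 z (by simp)
      have : eL [x, y, z] = g2W ⟨(x, y, z), hxy, hyz⟩ := by
        rw [g2W, eV_eq_eL]
        congr 1
      rw [this]
      exact Submodule.smul_mem _ _ (Submodule.subset_span ⟨_, rfl⟩)

lemma span3 : (⋀[ℝ]^3 (Fin 7 → ℝ)) = Submodule.span ℝ (Set.range g2W) := by
  refine le_antisymm ?_ ?_
  · rw [← ιMulti_span_fixedDegree, Submodule.span_le]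
    rintro _ ⟨v, rfl⟩
    have hv : v = fun i => ∑ j : Fin 7, v i j • (Pi.single j 1 : Fin 7 → ℝ) := by
      funext i j
      simp [Pi.single_apply, eq_comm]
    have expand : ιMulti ℝ 3 v =
        ∑ r : Fin 3 → Fin 7, (∏ i, v i (r i)) • eV r := by
      conv_lhs => rw [hv]
      rw [show (ιMulti ℝ 3 : _ [⋀^Fin 3]→ₗ[ℝ] _) (fun i => ∑ j : Fin 7,
          v i j • (Pi.single j 1 : Fin 7 → ℝ)) = (ιMulti ℝ 3).toMultilinearMap
          (fun i => ∑ j : Fin 7, v i j • (Pi.single j 1 : Fin 7 → ℝ)) from rfl,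
        MultilinearMap.map_sum]
      refine Finset.sum_congr rfl fun r _ => ?_
      rw [show ((ιMulti ℝ 3).toMultilinearMap fun i => v i (r i) • (Pi.single (r i) 1 : Fin 7 → ℝ))
          = (ιMulti ℝ 3).toMultilinearMap
            (fun i => (fun i => v i (r i)) i • (fun i => (Pi.single (r i) 1 : Fin 7 → ℝ)) i)
          from rfl, MultilinearMap.map_smul_univ]
      rfl
    rw [expand]
    exact Submodule.sum_mem _ fun r _ => Submodule.smul_mem _ _ (eV3_mem_span r)
  · rw [Submodule.span_le]
    rintro _ ⟨σ, rfl⟩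
    exact ιMulti_range ℝ 3 ⟨_, rfl⟩


def cvec : Fin 7 → Fin 6 → Fin 7 :=
  ![![1,2,3,4,5,6], ![0,2,3,4,5,6], ![0,1,3,4,5,6], ![0,1,2,4,5,6],
    ![0,1,2,3,5,6], ![0,1,2,3,4,6], ![0,1,2,3,4,5]]

noncomputable def E6 (k : Fin 7) : ExteriorAlgebra ℝ (Fin 7 → ℝ) := eV (cvec k)

def tri : Fin 7 → Fin 3 → Fin 7 :=
  ![![1,3,6], ![0,3,6], ![0,3,5], ![4,5,6], ![3,5,6], ![3,4,6], ![3,4,5]]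

noncomputable def u (k : Fin 7) : ExteriorAlgebra ℝ (Fin 7 → ℝ) := g2phi * eV (tri k)

lemma append33 {α : Type*} (x y z a b c : α) :
    Fin.append ![x,y,z] ![a,b,c] = ![x,y,z,a,b,c] := by
  funext i
  fin_cases i <;> rfl

lemma g2e_mul3 (a b c : Fin 7) : g2e a * g2e b * g2e c = eV ![a,b,c] := by
  rw [eV_eq_eL, show List.ofFn ![a,b,c] = [a,b,c] by simp [List.ofFn_succ]]
  simp [eL, mul_assoc]

lemma phi_mul (t : Fin 3 → Fin 7) : g2phi * eV t =
    eV (Fin.append ![0,1,2] t) + eV (Fin.append ![0,3,4] t) + eV (Fin.append ![0,5,6] t) +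
    eV (Fin.append ![1,3,5] t) - eV (Fin.append ![1,4,6] t) - eV (Fin.append ![2,3,6] t) -
    eV (Fin.append ![2,4,5] t) := by
  rw [g2phi, g2e_mul3, g2e_mul3, g2e_mul3, g2e_mul3, g2e_mul3, g2e_mul3, g2e_mul3]
  simp only [sub_mul, add_mul, eV_mul]

lemma dfun6_u (k j : Fin 7) : dfun 6 (cvec k) (u j) =
    dm (cvec k) (Fin.append ![0,1,2] (tri j)) + dm (cvec k) (Fin.append ![0,3,4] (tri j)) +
    dm (cvec k) (Fin.append ![0,5,6] (tri j)) + dm (cvec k) (Fin.append ![1,3,5] (tri j)) -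
    dm (cvec k) (Fin.append ![1,4,6] (tri j)) - dm (cvec k) (Fin.append ![2,3,6] (tri j)) -
    dm (cvec k) (Fin.append ![2,4,5] (tri j)) := by
  rw [u, phi_mul]
  simp only [map_add, map_sub, dfun_eV]

set_option maxHeartbeats 4000000 in
lemma dfun6_u_offdiag {k j : Fin 7} (h : k ≠ j) : dfun 6 (cvec k) (u j) = 0 := by
  fin_cases k <;> fin_cases j <;>
    first
      | exact absurd rfl h
      | (rw [dfun6_u]
         simp only [show ∀ x : Fin 7, tri x = tri x from fun _ => rfl]
         simp [tri, append33]
         simp (config := { decide := true }) only [dm_eq_zero]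
         ring)

def sig0 : Equiv.Perm (Fin 6) :=
  ⟨![1,3,4,0,2,5], ![3,0,4,1,2,5], by decide, by decide⟩
def sig2 : Equiv.Perm (Fin 6) :=
  ⟨![1,3,5,0,2,4], ![3,0,4,1,5,2], by decide, by decide⟩

lemma diag0 : dfun 6 (cvec 0) (u 0) ≠ 0 := by
  rw [dfun6_u,
    dm_eq_zero (τ := cvec 0) (v := Fin.append ![0,1,2] (tri 0)) (by decide),
    dm_eq_zero (τ := cvec 0) (v := Fin.append ![0,3,4] (tri 0)) (by decide),
    dm_eq_zero (τ := cvec 0) (v := Fin.append ![0,5,6] (tri 0)) (by decide),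
    dm_eq_zero (τ := cvec 0) (v := Fin.append ![1,3,5] (tri 0)) (by decide),
    dm_eq_zero (τ := cvec 0) (v := Fin.append ![1,4,6] (tri 0)) (by decide),
    dm_eq_zero (τ := cvec 0) (v := Fin.append ![2,3,6] (tri 0)) (by decide),
    show (Fin.append ![2,4,5] (tri 0) : Fin 6 → Fin 7) = cvec 0 ∘ sig0 from by
      funext i; fin_cases i <;> rfl,
    dm_perm (by decide) sig0]
  rcases Int.units_eq_one_or (Equiv.Perm.sign sig0) with h | h <;> rw [h] <;> norm_num

lemma diag1 : dfun 6 (cvec 1) (u 1) ≠ 0 := by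
  rw [dfun6_u,
    dm_eq_zero (τ := cvec 1) (v := Fin.append ![0,1,2] (tri 1)) (by decide),
    dm_eq_zero (τ := cvec 1) (v := Fin.append ![0,3,4] (tri 1)) (by decide),
    dm_eq_zero (τ := cvec 1) (v := Fin.append ![0,5,6] (tri 1)) (by decide),
    dm_eq_zero (τ := cvec 1) (v := Fin.append ![1,3,5] (tri 1)) (by decide),
    dm_eq_zero (τ := cvec 1) (v := Fin.append ![1,4,6] (tri 1)) (by decide),
    dm_eq_zero (τ := cvec 1) (v := Fin.append ![2,3,6] (tri 1)) (by decide),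
    show (Fin.append ![2,4,5] (tri 1) : Fin 6 → Fin 7) = cvec 1 ∘ sig0 from by
      funext i; fin_cases i <;> rfl,
    dm_perm (by decide) sig0]
  rcases Int.units_eq_one_or (Equiv.Perm.sign sig0) with h | h <;> rw [h] <;> norm_num

lemma diag2 : dfun 6 (cvec 2) (u 2) ≠ 0 := by
  rw [dfun6_u,
    dm_eq_zero (τ := cvec 2) (v := Fin.append ![0,1,2] (tri 2)) (by decide),
    dm_eq_zero (τ := cvec 2) (v := Fin.append ![0,3,4] (tri 2)) (by decide),
    dm_eq_zero (τ := cvec 2) (v := Fin.append ![0,5,6] (tri 2)) (by decide),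
    dm_eq_zero (τ := cvec 2) (v := Fin.append ![1,3,5] (tri 2)) (by decide),
    dm_eq_zero (τ := cvec 2) (v := Fin.append ![2,3,6] (tri 2)) (by decide),
    dm_eq_zero (τ := cvec 2) (v := Fin.append ![2,4,5] (tri 2)) (by decide),
    show (Fin.append ![1,4,6] (tri 2) : Fin 6 → Fin 7) = cvec 2 ∘ sig2 from by
      funext i; fin_cases i <;> rfl,
    dm_perm (by decide) sig2]
  rcases Int.units_eq_one_or (Equiv.Perm.sign sig2) with h | h <;> rw [h] <;> norm_num

lemma diag3 : dfun 6 (cvec 3) (u 3) ≠ 0 := by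
  rw [dfun6_u,
    dm_eq_zero (τ := cvec 3) (v := Fin.append ![0,3,4] (tri 3)) (by decide),
    dm_eq_zero (τ := cvec 3) (v := Fin.append ![0,5,6] (tri 3)) (by decide),
    dm_eq_zero (τ := cvec 3) (v := Fin.append ![1,3,5] (tri 3)) (by decide),
    dm_eq_zero (τ := cvec 3) (v := Fin.append ![1,4,6] (tri 3)) (by decide),
    dm_eq_zero (τ := cvec 3) (v := Fin.append ![2,3,6] (tri 3)) (by decide),
    dm_eq_zero (τ := cvec 3) (v := Fin.append ![2,4,5] (tri 3)) (by decide),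
    show (Fin.append ![0,1,2] (tri 3) : Fin 6 → Fin 7) = cvec 3 from by
      funext i; fin_cases i <;> rfl,
    dm_self (τ := cvec 3) (by decide)]
  norm_num

lemma diag4 : dfun 6 (cvec 4) (u 4) ≠ 0 := by
  rw [dfun6_u,
    dm_eq_zero (τ := cvec 4) (v := Fin.append ![0,3,4] (tri 4)) (by decide),
    dm_eq_zero (τ := cvec 4) (v := Fin.append ![0,5,6] (tri 4)) (by decide),
    dm_eq_zero (τ := cvec 4) (v := Fin.append ![1,3,5] (tri 4)) (by decide),
    dm_eq_zero (τ := cvec 4) (v := Fin.append ![1,4,6] (tri 4)) (by decide),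
    dm_eq_zero (τ := cvec 4) (v := Fin.append ![2,3,6] (tri 4)) (by decide),
    dm_eq_zero (τ := cvec 4) (v := Fin.append ![2,4,5] (tri 4)) (by decide),
    show (Fin.append ![0,1,2] (tri 4) : Fin 6 → Fin 7) = cvec 4 from by
      funext i; fin_cases i <;> rfl,
    dm_self (τ := cvec 4) (by decide)]
  norm_num

lemma diag5 : dfun 6 (cvec 5) (u 5) ≠ 0 := by
  rw [dfun6_u,
    dm_eq_zero (τ := cvec 5) (v := Fin.append ![0,3,4] (tri 5)) (by decide),
    dm_eq_zero (τ := cvec 5) (v := Fin.append ![0,5,6] (tri 5)) (by decide),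
    dm_eq_zero (τ := cvec 5) (v := Fin.append ![1,3,5] (tri 5)) (by decide),
    dm_eq_zero (τ := cvec 5) (v := Fin.append ![1,4,6] (tri 5)) (by decide),
    dm_eq_zero (τ := cvec 5) (v := Fin.append ![2,3,6] (tri 5)) (by decide),
    dm_eq_zero (τ := cvec 5) (v := Fin.append ![2,4,5] (tri 5)) (by decide),
    show (Fin.append ![0,1,2] (tri 5) : Fin 6 → Fin 7) = cvec 5 from by
      funext i; fin_cases i <;> rfl,
    dm_self (τ := cvec 5) (by decide)]
  norm_num

lemma diag6 : dfun 6 (cvec 6) (u 6) ≠ 0 := by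
  rw [dfun6_u,
    dm_eq_zero (τ := cvec 6) (v := Fin.append ![0,3,4] (tri 6)) (by decide),
    dm_eq_zero (τ := cvec 6) (v := Fin.append ![0,5,6] (tri 6)) (by decide),
    dm_eq_zero (τ := cvec 6) (v := Fin.append ![1,3,5] (tri 6)) (by decide),
    dm_eq_zero (τ := cvec 6) (v := Fin.append ![1,4,6] (tri 6)) (by decide),
    dm_eq_zero (τ := cvec 6) (v := Fin.append ![2,3,6] (tri 6)) (by decide),
    dm_eq_zero (τ := cvec 6) (v := Fin.append ![2,4,5] (tri 6)) (by decide),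
    show (Fin.append ![0,1,2] (tri 6) : Fin 6 → Fin 7) = cvec 6 from by
      funext i; fin_cases i <;> rfl,
    dm_self (τ := cvec 6) (by decide)]
  norm_num

lemma dfun6_u_diag (k : Fin 7) : dfun 6 (cvec k) (u k) ≠ 0 := by
  fin_cases k
  exacts [diag0, diag1, diag2, diag3, diag4, diag5, diag6]


lemma sorted6 (m : List (Fin 7)) (hm : m.Pairwise (· < ·)) (hlen : m.length = 6) :
    ∃ k : Fin 7, m = List.ofFn (cvec k) := by
  have hnd : m.Nodup := hm.nodup
  have hcard : m.toFinset.card = 6 := by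
    rw [List.toFinset_card_of_nodup hnd, hlen]
  have h1 : (Finset.univ \ m.toFinset).card = 1 := by
    rw [Finset.card_sdiff_of_subset (Finset.subset_univ _), hcard]
    rfl
  obtain ⟨k, hk⟩ := Finset.card_eq_one.1 h1
  refine ⟨k, ?_⟩
  have htf : m.toFinset = Finset.univ \ {k} := by
    rw [← hk, Finset.sdiff_sdiff_self_left, Finset.univ_inter]
  have hknd : (List.ofFn (cvec k)).Nodup := by
    fin_cases k <;> decide
  have hktf : (List.ofFn (cvec k)).toFinset = Finset.univ \ {k} := by
    fin_cases k <;> decide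
  have hperm : m.Perm (List.ofFn (cvec k)) :=
    List.perm_of_nodup_nodup_toFinset_eq hnd hknd (by rw [htf, hktf])
  haveI : IsAntisymm (Fin 7) (· < ·) := ⟨fun a b h1 h2 => absurd h1 (asymm h2)⟩
  exact List.Perm.eq_of_pairwise' hm (by fin_cases k <;> decide) hperm

lemma eV6_mem (r : Fin 6 → Fin 7) : eV r ∈ Submodule.span ℝ (Set.range E6) := by
  obtain ⟨ε, m, hm, hlen, heq⟩ := eL_norm (List.ofFn r)
  rw [eV_eq_eL, heq]
  rcases hlen with rfl | hlen
  · rw [zero_smul]; exact Submodule.zero_mem _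
  · rw [List.length_ofFn] at hlen
    obtain ⟨k, rfl⟩ := sorted6 m hm hlen
    rw [← eV_eq_eL]
    exact Submodule.smul_mem _ _ (Submodule.subset_span ⟨k, rfl⟩)


lemma phi_eV3_mem (t : Fin 3 → Fin 7) :
    g2phi * eV t ∈ Submodule.span ℝ (Set.range E6) := by
  rw [phi_mul]
  exact Submodule.sub_mem _ (Submodule.sub_mem _ (Submodule.sub_mem _
    (Submodule.add_mem _ (Submodule.add_mem _ (Submodule.add_mem _
      (eV6_mem _) (eV6_mem _)) (eV6_mem _)) (eV6_mem _)) (eV6_mem _)) (eV6_mem _)) (eV6_mem _)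

lemma u_indep : LinearIndependent ℝ u := by
  rw [Fintype.linearIndependent_iff]
  intro c hc j
  have := congrArg (dfun 6 (cvec j)) hc
  rw [map_sum, map_zero] at this
  simp only [map_smul, smul_eq_mul] at this
  rw [Finset.sum_eq_single j] at this
  · rcases mul_eq_zero.1 this with h | h
    · exact h
    · exact absurd h (dfun6_u_diag j)
  · intro k _ hk
    rw [dfun6_u_offdiag (Ne.symm hk), mul_zero]
  · intro h
    exact absurd (Finset.mem_univ j) h

/-- The kernel of the linear map `⋀³ℝ⁷ → ⋀⁶ℝ⁷`, `x ↦ φ * x`, has dimension `28`.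
(This is the fibre of the bundle `Λ⊥⁴` of the paper's complex (9).) -/
theorem g2_ker_three_finrank :
    Module.finrank ℝ
      ↥((⋀[ℝ]^3 (Fin 7 → ℝ)) ⊓ LinearMap.ker (LinearMap.mulLeft ℝ g2phi)) = 28 := by
  set L := LinearMap.mulLeft ℝ g2phi
  set P := (⋀[ℝ]^3 (Fin 7 → ℝ)) with hP
  haveI : FiniteDimensional ℝ P := by
    rw [hP, span3]
    exact FiniteDimensional.span_of_finite ℝ (Set.finite_range g2W)
  set f : P →ₗ[ℝ] ExteriorAlgebra ℝ (Fin 7 → ℝ) := L ∘ₗ P.subtype with hf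
  have hker : Submodule.map P.subtype (LinearMap.ker f) = P ⊓ LinearMap.ker L := by
    rw [hf, LinearMap.ker_comp, Submodule.map_comap_subtype]
  have hrank : Module.finrank ℝ (LinearMap.range f) + Module.finrank ℝ (LinearMap.ker f)
      = Module.finrank ℝ P := LinearMap.finrank_range_add_finrank_ker f
  have hP35 : Module.finrank ℝ P = 35 := by
    rw [hP, span3, finrank_span_eq_card g2W_indep]
    rw [show Fintype.card T3 = 35 from by decide]
  have hrange : LinearMap.range f
      = Submodule.span ℝ (Set.range (fun σ : T3 => g2phi * g2W σ)) := by
    rw [hf, LinearMap.range_comp, Submodule.range_subtype, hP, span3, Submodule.map_span,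
      ← Set.range_comp]
    rfl
  have hle : LinearMap.range f ≤ Submodule.span ℝ (Set.range E6) := by
    rw [hrange, Submodule.span_le]
    rintro _ ⟨σ, rfl⟩
    exact phi_eV3_mem _
  haveI : FiniteDimensional ℝ (Submodule.span ℝ (Set.range E6)) :=
    FiniteDimensional.span_of_finite ℝ (Set.finite_range E6)
  have h7le : Module.finrank ℝ (LinearMap.range f) ≤ 7 := by
    classical
    refine le_trans (Submodule.finrank_mono hle) ?_
    refine le_trans (finrank_span_le_card _) ?_
    rw [Set.toFinset_range]
    exact le_trans (Finset.card_image_le) (by simp)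
  have hmem : ∀ k : Fin 7, u k ∈ LinearMap.range f := by
    intro k
    refine ⟨⟨eV (tri k), ?_⟩, rfl⟩
    rw [hP]
    exact ιMulti_range ℝ 3 ⟨_, rfl⟩
  have hge7 : 7 ≤ Module.finrank ℝ (LinearMap.range f) := by
    haveI : FiniteDimensional ℝ (LinearMap.range f) := by
      rw [hrange]
      exact FiniteDimensional.span_of_finite ℝ (Set.finite_range _)
    have hsp : Submodule.span ℝ (Set.range u) ≤ LinearMap.range f := by
      rw [Submodule.span_le]
      rintro _ ⟨k, rfl⟩
      exact hmem k
    have := Submodule.finrank_mono hsp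
    rw [finrank_span_eq_card u_indep] at this
    simpa using this
  have h7 : Module.finrank ℝ (LinearMap.range f) = 7 := le_antisymm h7le hge7
  have hkf : Module.finrank ℝ (LinearMap.ker f) = 28 := by omega
  calc Module.finrank ℝ ↥(P ⊓ LinearMap.ker L)
      = Module.finrank ℝ ↥(Submodule.map P.subtype (LinearMap.ker f)) := by rw [hker]
    _ = Module.finrank ℝ (LinearMap.ker f) := Submodule.finrank_map_subtype_eq P _
    _ = 28 := hkf
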